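/- Let X be a Polish space. Then for every sequence y : [ω]² → X, the set Λ_y(r) of r-limit points of y is an analytic subset of X. -/

import Mathlib

open Set Filter Topology

/-- Elements of `[ω]²` (two-element subsets of `ω`), encoded as ordered pairs
`(i, j)` with `i < j`. -/
abbrev Pair : Type := {p : ℕ × ℕ // p.1 < p.2}

/-- `[D]²`: the two-element subsets of `D`. -/
def pairsOf (D : Set ℕ) : Set Pair := {p | p.1.1 ∈ D ∧ p.1.2 ∈ D}

variable {X : Type*}

/-- `η` is an `r`-limit point of the sequence `x : [ω]² → X`. -/
def IsRLimitPoint [TopologicalSpace X] (x : Pair → X) (η : X) : Prop :=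
  ∃ D : Set ℕ, D.Infinite ∧ ∀ U ∈ 𝓝 η, ∃ K : Set ℕ, K.Finite ∧
    ∀ p ∈ pairsOf (D \ K), x p ∈ U

/-- `η` is an `r`-cluster point of the sequence `x : [ω]² → X`. -/
def IsRClusterPoint [TopologicalSpace X] (x : Pair → X) (η : X) : Prop :=
  ∀ U ∈ 𝓝 η, ∃ D : Set ℕ, D.Infinite ∧ pairsOf D ⊆ {p | x p ∈ U}

theorem lambda_r_analytic [TopologicalSpace X] [PolishSpace X] (y : Pair → X) :
    MeasureTheory.AnalyticSet {η | IsRLimitPoint y η} := by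
  letI := TopologicalSpace.upgradeIsCompletelyMetrizable X
  letI : MeasurableSpace ((ℕ → ℕ) × X) := borel _
  haveI : BorelSpace ((ℕ → ℕ) × X) := ⟨rfl⟩
  set B : Set ((ℕ → ℕ) × X) :=
    {q | StrictMono q.1 ∧ ∀ n : ℕ, ∃ m : ℕ, ∀ p : Pair,
      (p.1.1 ∈ Set.range q.1 ∧ p.1.2 ∈ Set.range q.1 ∧ m ≤ p.1.1) →
      dist (y p) q.2 < 1 / (n + 1)} with hBdef
  have hrange : ∀ a : ℕ, MeasurableSet {q : (ℕ → ℕ) × X | a ∈ Set.range q.1} := by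
    intro a
    have h : {q : (ℕ → ℕ) × X | a ∈ Set.range q.1} =
        ⋃ k, (fun q : (ℕ → ℕ) × X => q.1 k) ⁻¹' {a} := by
      ext q; simp [Set.mem_range, eq_comm]
    rw [h]
    refine MeasurableSet.iUnion fun k => ?_
    have hk : Measurable fun q : (ℕ → ℕ) × X => q.1 k :=
      ((continuous_apply k).comp continuous_fst).measurable
    exact hk (measurableSet_singleton a)
  have hB : MeasurableSet B := by
    rw [hBdef]
    have hsplit : {q : (ℕ → ℕ) × X | StrictMono q.1 ∧ ∀ n : ℕ, ∃ m : ℕ, ∀ p : Pair,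
        (p.1.1 ∈ Set.range q.1 ∧ p.1.2 ∈ Set.range q.1 ∧ m ≤ p.1.1) →
        dist (y p) q.2 < 1 / (n + 1)} =
        ({q : (ℕ → ℕ) × X | StrictMono q.1} ∩
         ⋂ (n : ℕ), ⋃ (m : ℕ), ⋂ (p : Pair),
          (({q : (ℕ → ℕ) × X | p.1.1 ∈ Set.range q.1 ∧ p.1.2 ∈ Set.range q.1 ∧ m ≤ p.1.1})ᶜ ∪
           {q : (ℕ → ℕ) × X | dist (y p) q.2 < 1 / (n + 1)})) := by
      ext q
      simp only [Set.mem_setOf_eq, Set.mem_inter_iff, Set.mem_iInter, Set.mem_iUnion,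
        Set.mem_union, Set.mem_compl_iff, imp_iff_not_or]
    rw [hsplit]
    apply MeasurableSet.inter
    · have h1 : {q : (ℕ → ℕ) × X | StrictMono q.1} =
        ⋂ (a : ℕ) (b : ℕ) (_ : a < b), {q : (ℕ → ℕ) × X | q.1 a < q.1 b} := by
        ext q
        simp only [Set.mem_setOf_eq, Set.mem_iInter]
        exact ⟨fun h a b hab => h hab, fun h a b hab => h a b hab⟩
      rw [h1]
      refine MeasurableSet.iInter fun a => MeasurableSet.iInter fun b =>
        MeasurableSet.iInter fun _ => ?_
      have ha : Measurable fun q : (ℕ → ℕ) × X => q.1 a :=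
        ((continuous_apply a).comp continuous_fst).measurable
      have hb : Measurable fun q : (ℕ → ℕ) × X => q.1 b :=
        ((continuous_apply b).comp continuous_fst).measurable
      exact measurableSet_lt ha hb
    · refine MeasurableSet.iInter fun n => MeasurableSet.iUnion fun m =>
        MeasurableSet.iInter fun p => MeasurableSet.union (MeasurableSet.compl ?_) ?_
      · exact ((hrange _).inter ((hrange _).inter (MeasurableSet.const _)))
      · have : IsOpen {q : (ℕ → ℕ) × X | dist (y p) q.2 < 1 / (n + 1)} :=
          isOpen_lt (continuous_const.dist continuous_snd) continuous_const
        exact this.measurableSet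
  have himg : {η | IsRLimitPoint y η} = Prod.snd '' B := by
    ext η
    simp only [Set.mem_setOf_eq, Set.mem_image, hBdef]
    constructor
    · rintro ⟨D, hD, hU⟩
      refine ⟨(Nat.nth (· ∈ D), η), ⟨Nat.nth_strictMono hD, fun n => ?_⟩, rfl⟩
      obtain ⟨K, hKfin, hK⟩ := hU (Metric.ball η (1 / (n + 1)))
        (Metric.ball_mem_nhds η (by positivity))
      obtain ⟨m, hm⟩ := hKfin.bddAbove
      refine ⟨m + 1, fun p hp => ?_⟩
      dsimp only at hp ⊢
      rw [Nat.range_nth_of_infinite (p := (· ∈ D)) hD] at hp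
      obtain ⟨h1, h2, h3⟩ := hp
      have hp2 : m + 1 ≤ p.1.2 := h3.trans p.2.le
      have hmem : p ∈ pairsOf (D \ K) := by
        refine ⟨⟨h1, fun hc => ?_⟩, ⟨h2, fun hc => ?_⟩⟩
        · exact absurd (hm hc) (by omega)
        · exact absurd (hm hc) (by omega)
      simpa [Metric.mem_ball] using hK p hmem
    · rintro ⟨⟨f, η'⟩, ⟨hf, hB2⟩, rfl⟩
      dsimp only at hf hB2 ⊢
      refine ⟨Set.range f, Set.infinite_range_of_injective hf.injective, fun U hU => ?_⟩
      obtain ⟨ε, hε, hball⟩ := Metric.mem_nhds_iff.1 hU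
      obtain ⟨n, hn⟩ := exists_nat_one_div_lt hε
      obtain ⟨m, hm⟩ := hB2 n
      refine ⟨Set.Iio m, Set.finite_Iio m, fun p hp => ?_⟩
      obtain ⟨⟨h1, h1'⟩, ⟨h2, _⟩⟩ := hp
      have hlt := hm p ⟨h1, h2, by simpa using h1'⟩
      apply hball
      rw [Metric.mem_ball]
      calc dist (y p) η' < 1 / (n + 1) := hlt
        _ < ε := by exact_mod_cast hn
  rw [himg]
  exact hB.analyticSet.image_of_continuous continuous_snd
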